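/- For every set Λ of non-negative integers, the minimum density D̲₂(Λ) equals the supremum of densities of measurable subsets Λ' ⊆ Λ. -/

import Mathlib

open Filter

/-- Counting function `n(x, Λ) = #(Λ ∩ [0, x])`. -/
noncomputable def countFn (Λ : Set ℕ) (x : ℝ) : ℕ :=
  {m ∈ Λ | (m : ℝ) ≤ x}.ncard

/-- Local density of `Λ` on the window `(x, (1+r)x]`. -/
noncomputable def windowRatio (Λ : Set ℕ) (r x : ℝ) : ℝ :=
  ((countFn Λ ((1 + r) * x) : ℝ) - countFn Λ x) / (r * x)

/-- `liminf` as `x → ∞` of the local density at window parameter `r`. -/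
noncomputable def lowerWindow (Λ : Set ℕ) (r : ℝ) : ℝ :=
  liminf (fun x : ℝ => windowRatio Λ r x) atTop

/-- `limsup` as `x → ∞` of the local density at window parameter `r`. -/
noncomputable def upperWindow (Λ : Set ℕ) (r : ℝ) : ℝ :=
  limsup (fun x : ℝ => windowRatio Λ r x) atTop

/-- `Λ` is measurable with density `d`. -/
def HasDensity (Λ : Set ℕ) (d : ℝ) : Prop :=
  Tendsto (fun x : ℝ => (countFn Λ x : ℝ) / x) atTop (nhds d)

open scoped Classical

open scoped Classical in
/-- countFn as a Finset card. -/
lemma countFn_eq_card (Λ : Set ℕ) {x : ℝ} (hx : 0 ≤ x) :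
    countFn Λ x = ((Finset.Iic ⌊x⌋₊).filter (· ∈ Λ)).card := by
  rw [countFn]
  have : {m ∈ Λ | (m : ℝ) ≤ x} = ((Finset.Iic ⌊x⌋₊).filter (· ∈ Λ) : Finset ℕ) := by
    ext m
    simp only [Set.mem_setOf_eq, Finset.coe_filter, Finset.mem_Iic, Nat.le_floor_iff hx]
    tauto
  rw [this, Set.ncard_coe_finset]

lemma countFn_of_neg (Λ : Set ℕ) {x : ℝ} (hx : x < 0) : countFn Λ x = 0 := by
  rw [countFn]
  convert Set.ncard_empty ℕ
  ext m
  simp only [Set.mem_setOf_eq, Set.mem_empty_iff_false, iff_false, not_and]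
  intro _
  exact fun h' => absurd h' (not_le.2 (lt_of_lt_of_le hx (Nat.cast_nonneg m)))

lemma countFn_mono (Λ : Set ℕ) {x y : ℝ} (hxy : x ≤ y) : countFn Λ x ≤ countFn Λ y := by
  classical
  rcases lt_or_ge x 0 with hx | hx
  · simp [countFn_of_neg Λ hx]
  · rw [countFn_eq_card Λ hx, countFn_eq_card Λ (hx.trans hxy)]
    exact Finset.card_le_card (Finset.filter_subset_filter _
      (Finset.Iic_subset_Iic.mpr (Nat.floor_le_floor hxy)))

open scoped Classical in
lemma countFn_diff_eq (Λ : Set ℕ) {x y : ℝ} (hx : 0 ≤ x) (hxy : x ≤ y) :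
    countFn Λ y - countFn Λ x = ((Finset.Ioc ⌊x⌋₊ ⌊y⌋₊).filter (· ∈ Λ)).card := by
  rw [countFn_eq_card Λ hx, countFn_eq_card Λ (hx.trans hxy)]
  have hIic : Finset.Iic ⌊y⌋₊ = Finset.Iic ⌊x⌋₊ ∪ Finset.Ioc ⌊x⌋₊ ⌊y⌋₊ :=
    by
    ext k
    have := Nat.floor_le_floor hxy (R := ℝ)
    simp only [Finset.mem_Iic, Finset.mem_union, Finset.mem_Ioc]
    omega
  rw [hIic, Finset.filter_union, Finset.card_union_of_disjoint]
  · omega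
  · refine Finset.disjoint_filter_filter ?_
    rw [Finset.disjoint_left]
    intro k hk hk'
    simp only [Finset.mem_Iic, Finset.mem_Ioc] at hk hk'
    omega

open scoped Classical in
lemma countFn_diff_eq' (Λ : Set ℕ) {x y : ℝ} (hx : 0 ≤ x) (hxy : x ≤ y) :
    (countFn Λ y : ℝ) - countFn Λ x = ((Finset.Ioc ⌊x⌋₊ ⌊y⌋₊).filter (· ∈ Λ)).card := by
  have h := countFn_diff_eq Λ hx hxy
  have hm := countFn_mono Λ hxy
  rw [← Nat.cast_sub hm, h]

/-- difference of counts is monotone in the set -/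
lemma countFn_diff_mono {Λ' Λ : Set ℕ} (h : Λ' ⊆ Λ) {x y : ℝ} (hx : 0 ≤ x) (hxy : x ≤ y) :
    (countFn Λ' y : ℝ) - countFn Λ' x ≤ (countFn Λ y : ℝ) - countFn Λ x := by
  classical
  rw [countFn_diff_eq' Λ' hx hxy, countFn_diff_eq' Λ hx hxy]
  exact_mod_cast Finset.card_le_card (Finset.monotone_filter_right _ (fun n _ hn => h hn))

/-- upper bound on the count difference -/
lemma countFn_diff_le (Λ : Set ℕ) {x y : ℝ} (hx : 0 ≤ x) (hxy : x ≤ y) :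
    (countFn Λ y : ℝ) - countFn Λ x ≤ y - x + 1 := by
  classical
  rw [countFn_diff_eq' Λ hx hxy]
  have h1 : ((Finset.Ioc ⌊x⌋₊ ⌊y⌋₊).filter (· ∈ Λ)).card ≤ (Finset.Ioc ⌊x⌋₊ ⌊y⌋₊).card :=
    Finset.card_le_card (Finset.filter_subset _ _)
  have h2 : (Finset.Ioc ⌊x⌋₊ ⌊y⌋₊).card = ⌊y⌋₊ - ⌊x⌋₊ := Nat.card_Ioc _ _
  have h3 : (⌊y⌋₊ : ℝ) - ⌊x⌋₊ ≤ y - x + 1 := by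
    have := Nat.floor_le (hx.trans hxy)
    have := Nat.lt_floor_add_one x
    linarith
  have h4 : ((⌊y⌋₊ - ⌊x⌋₊ : ℕ) : ℝ) = (⌊y⌋₊ : ℝ) - ⌊x⌋₊ := by
    rw [Nat.cast_sub (Nat.floor_le_floor hxy)]
  calc (((Finset.Ioc ⌊x⌋₊ ⌊y⌋₊).filter (· ∈ Λ)).card : ℝ)
      ≤ ((⌊y⌋₊ - ⌊x⌋₊ : ℕ) : ℝ) := by exact_mod_cast h2 ▸ h1
    _ ≤ y - x + 1 := by linarith

/-- windowRatio is eventually nonnegative -/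
lemma windowRatio_nonneg (Λ : Set ℕ) {r : ℝ} (hr : 0 < r) :
    ∀ᶠ x : ℝ in atTop, 0 ≤ windowRatio Λ r x := by
  filter_upwards [eventually_gt_atTop (0:ℝ)] with x hx
  have h1 : x ≤ (1 + r) * x := by nlinarith
  have h2 : (countFn Λ x : ℝ) ≤ countFn Λ ((1+r)*x) := Nat.cast_le.2 (countFn_mono Λ h1)
  exact div_nonneg (by linarith) (by positivity)

/-- windowRatio is eventually at most 2 -/
lemma windowRatio_le_two (Λ : Set ℕ) {r : ℝ} (hr : 0 < r) :
    ∀ᶠ x : ℝ in atTop, windowRatio Λ r x ≤ 2 := by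
  filter_upwards [eventually_ge_atTop (1/r), eventually_gt_atTop (0:ℝ)] with x hx hx0
  have hrx : 1 ≤ r * x := by
    rw [div_le_iff₀ hr] at hx; linarith [mul_comm x r]
  have h1 : x ≤ (1 + r) * x := by nlinarith
  have h2 : (countFn Λ ((1+r)*x) : ℝ) - countFn Λ x ≤ (1+r)*x - x + 1 :=
    countFn_diff_le Λ hx0.le h1
  rw [windowRatio, div_le_iff₀ (by positivity)]
  nlinarith

/-- the window ratio of a set having density d tends to d -/
lemma windowRatio_tendsto {Λ' : Set ℕ} {d : ℝ} (hd : HasDensity Λ' d) {r : ℝ} (hr : 0 < r) :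
    Tendsto (fun x : ℝ => windowRatio Λ' r x) atTop (nhds d) := by
  have h1r : (0:ℝ) < 1 + r := by linarith
  have ht1 : Tendsto (fun x : ℝ => (1 + r) * x) atTop atTop :=
    Tendsto.const_mul_atTop h1r tendsto_id
  have h2 : Tendsto (fun x : ℝ => (countFn Λ' ((1+r)*x) : ℝ) / ((1+r)*x)) atTop (nhds d) :=
    hd.comp ht1
  have h3 : Tendsto (fun x : ℝ =>
      ((1+r) * ((countFn Λ' ((1+r)*x) : ℝ) / ((1+r)*x)) - (countFn Λ' x : ℝ) / x) / r)
      atTop (nhds (((1+r) * d - d) / r)) :=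
    Tendsto.div_const (Tendsto.sub (h2.const_mul _) hd) r
  have heq : (((1:ℝ)+r) * d - d) / r = d := by field_simp; ring
  rw [heq] at h3
  apply h3.congr'
  filter_upwards [eventually_gt_atTop (0:ℝ)] with x hx
  rw [windowRatio]
  have hx' : x ≠ 0 := ne_of_gt hx
  field_simp

/-- Part A : each subset density is at most lowerWindow for each r > 0 -/
lemma density_le_lowerWindow {Λ Λ' : Set ℕ} (hsub : Λ' ⊆ Λ) {d : ℝ}
    (hd : HasDensity Λ' d) {r : ℝ} (hr : 0 < r) : d ≤ lowerWindow Λ r := by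
  have hten := windowRatio_tendsto hd hr
  have hle : ∀ᶠ x : ℝ in atTop, windowRatio Λ' r x ≤ windowRatio Λ r x := by
    filter_upwards [eventually_gt_atTop (0:ℝ)] with x hx
    have h1 : x ≤ (1 + r) * x := by nlinarith
    have hnum := countFn_diff_mono hsub hx.le h1
    rw [windowRatio, windowRatio]
    gcongr
  have h1 : d = liminf (fun x : ℝ => windowRatio Λ' r x) atTop := hten.liminf_eq.symm
  rw [h1, lowerWindow]
  exact liminf_le_liminf hle hten.isBoundedUnder_ge
    (isCoboundedUnder_ge_of_eventually_le atTop (windowRatio_le_two Λ hr))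

/-- The greedy counting function: `greedyCount Λ t n` is the number of chosen
elements below `n`. -/
noncomputable def greedyCount (Λ : Set ℕ) (t : ℝ) : ℕ → ℕ
  | 0 => 0
  | n + 1 => greedyCount Λ t n +
      if n ∈ Λ ∧ (greedyCount Λ t n : ℝ) < t * (n + 1) then 1 else 0

/-- The greedy subset of `Λ` of density `t`. -/
def greedySet (Λ : Set ℕ) (t : ℝ) : Set ℕ :=
  {n | n ∈ Λ ∧ (greedyCount Λ t n : ℝ) < t * (n + 1)}

lemma greedySet_subset (Λ : Set ℕ) (t : ℝ) : greedySet Λ t ⊆ Λ := fun _ h => h.1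

lemma greedyCount_succ (Λ : Set ℕ) (t : ℝ) (n : ℕ) :
    greedyCount Λ t (n + 1) = greedyCount Λ t n + if n ∈ greedySet Λ t then 1 else 0 := by
  rw [greedyCount]
  congr 1
  exact if_congr Iff.rfl rfl rfl

lemma greedyCount_mono (Λ : Set ℕ) (t : ℝ) : Monotone (greedyCount Λ t) := by
  apply monotone_nat_of_le_succ
  intro n
  rw [greedyCount_succ]
  omega

/-- The count of the greedy set below `k` is `greedyCount (k+1)`. -/
lemma greedySet_card (Λ : Set ℕ) (t : ℝ) (k : ℕ) :
    ((Finset.Iic k).filter (· ∈ greedySet Λ t)).card = greedyCount Λ t (k + 1) := by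
  induction k with
  | zero =>
    rw [greedyCount_succ]
    have h0 : Finset.Iic 0 = {0} := rfl
    rw [h0, Finset.filter_singleton]
    simp only [greedyCount]
    split <;> simp_all
  | succ k ih =>
    have : Finset.Iic (k+1) = insert (k+1) (Finset.Iic k) := by
      ext m; simp [Finset.mem_insert]; omega
    rw [this, Finset.filter_insert, greedyCount_succ Λ t (k+1)]
    split
    · rw [Finset.card_insert_of_notMem (by simp), ih]
    · rw [ih]
      simp_all

lemma countFn_greedySet (Λ : Set ℕ) (t : ℝ) {x : ℝ} (hx : 0 ≤ x) :
    countFn (greedySet Λ t) x = greedyCount Λ t (⌊x⌋₊ + 1) := by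
  classical
  rw [countFn_eq_card _ hx, greedySet_card]

/-- Upper bound on the greedy count. -/
lemma greedyCount_lt (Λ : Set ℕ) {t : ℝ} (ht : 0 ≤ t) (n : ℕ) :
    (greedyCount Λ t n : ℝ) < t * n + 1 := by
  induction n with
  | zero => simp [greedyCount]
  | succ n ih =>
    rw [greedyCount_succ]
    by_cases h : n ∈ greedySet Λ t
    · have := h.2
      push_cast
      simp only [h, if_pos]
      push_cast
      linarith
    · simp only [h, if_neg, not_false_iff, add_zero]
      push_cast
      nlinarith [ht]

/-- If on `[a, b)` the greedy condition is never blocked, every element of `Λ`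
in that interval is taken. -/
lemma greedyCount_interval (Λ : Set ℕ) (t : ℝ) {a b : ℕ} (hab : a ≤ b)
    (h : ∀ k, a ≤ k → k < b → (greedyCount Λ t k : ℝ) < t * (k + 1)) :
    greedyCount Λ t a + ((Finset.Ico a b).filter (· ∈ Λ)).card ≤ greedyCount Λ t b := by
  classical
  induction b with
  | zero =>
    have : a = 0 := Nat.le_zero.1 hab
    simp [this]
  | succ b ih =>
    rcases Nat.lt_or_ge a (b+1) with hab' | hab'
    · have hab2 : a ≤ b := by omega
      have ih2 := ih hab2 (fun k hk hk' => h k hk (by omega))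
      have hIco : Finset.Ico a (b+1) = insert b (Finset.Ico a b) := by
        ext m; simp [Finset.mem_insert]; omega
      rw [hIco, Finset.filter_insert, greedyCount_succ]
      by_cases hbΛ : b ∈ Λ
      · have hbg : b ∈ greedySet Λ t := ⟨hbΛ, by exact_mod_cast h b hab2 (by omega)⟩
        rw [if_pos hbΛ, Finset.card_insert_of_notMem (by simp), if_pos hbg]
        omega
      · have hbg : b ∉ greedySet Λ t := fun hc => hbΛ hc.1
        rw [if_neg hbΛ, if_neg hbg]
        omega
    · have : a = b + 1 := by omega
      simp [this]

/-- Chaining the window estimate over geometric windows. -/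
lemma countFn_chain (Λ : Set ℕ) {r t' X : ℝ} (hr : 0 < r) (ht' : 0 ≤ t') (hX : 1 ≤ X)
    (hwin : ∀ x : ℝ, X ≤ x → t' * (r * x) ≤ (countFn Λ ((1 + r) * x) : ℝ) - countFn Λ x) :
    ∀ a b : ℝ, X ≤ a → a ≤ b →
      t' * (b / (1 + r) - a) ≤ (countFn Λ b : ℝ) - countFn Λ a := by
  intro a b ha hab
  have h1r : (1:ℝ) < 1 + r := by linarith
  have h1r' : (0:ℝ) < 1 + r := by linarith
  have ha0 : (0:ℝ) < a := lt_of_lt_of_le one_pos (hX.trans ha)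
  obtain ⟨J, hJ⟩ := pow_unbounded_of_one_lt (b / a) h1r
  have hJ' : b ≤ a * (1 + r) ^ J := by
    rw [div_lt_iff₀ ha0] at hJ
    nlinarith
  clear hJ
  induction J generalizing b with
  | zero =>
    simp only [pow_zero, mul_one] at hJ'
    have hba : b = a := le_antisymm hJ' hab
    subst hba
    have : b / (1 + r) ≤ b := by
      rw [div_le_iff₀ h1r']
      nlinarith
    have hc : ((countFn Λ b : ℝ) - countFn Λ b) = 0 := by simp
    nlinarith
  | succ J ih =>
    rcases le_or_gt b (a * (1 + r)) with hb1 | hb1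
    · -- single window or less: LHS ≤ 0
      have hL : b / (1 + r) - a ≤ 0 := by
        rw [sub_nonpos, div_le_iff₀ h1r']
        linarith [mul_comm a (1+r)]
      have hc : (0:ℝ) ≤ (countFn Λ b : ℝ) - countFn Λ a := by
        have := countFn_mono Λ hab
        have : (countFn Λ a : ℝ) ≤ countFn Λ b := Nat.cast_le.2 this
        linarith
      nlinarith
    · have hb0 : 0 < b := lt_of_lt_of_le ha0 hab
      set y := b / (1 + r) with hy
      have hy0 : 0 < y := div_pos hb0 h1r'
      have hya : a ≤ y := by
        rw [hy, le_div_iff₀ h1r']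
        linarith [mul_comm a (1+r)]
      have hyb : y ≤ b := by
        rw [hy, div_le_iff₀ h1r']
        nlinarith
      have hXy : X ≤ y := ha.trans hya
      have hyJ : y ≤ a * (1 + r) ^ J := by
        rw [hy, div_le_iff₀ h1r']
        calc b ≤ a * (1 + r) ^ (J + 1) := hJ'
          _ = a * (1 + r) ^ J * (1 + r) := by ring
      have hih := ih y hya hyJ
      have hw := hwin y hXy
      have hyy : (1 + r) * y = b := by
        rw [hy]; field_simp
      rw [hyy] at hw
      have hmain : t' * (b / (1 + r) - a) ≤ t' * (y / (1 + r) - a) + t' * (r * y) := by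
        have h2 : y - r * y ≤ y / (1 + r) := by
          rw [le_div_iff₀ h1r']
          nlinarith
        have h3 : b / (1 + r) ≤ y / (1 + r) + r * y := by
          rw [← hy]
          linarith
        nlinarith
      linarith

set_option maxHeartbeats 2000000 in
lemma greedy_lower (Λ : Set ℕ) {t t' r X : ℝ} (ht : 0 < t) (htt' : t * (1 + r) ≤ t')
    (hr : 0 < r) (hX : 1 ≤ X)
    (hchain : ∀ a b : ℝ, X ≤ a → a ≤ b →
      t' * (b / (1 + r) - a) ≤ (countFn Λ b : ℝ) - countFn Λ a) :
    ∀ m : ℕ, ⌈X⌉₊ + 1 ≤ m →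
      t * m - t * r * m - t' * (⌈X⌉₊ + 1) ≤ (greedyCount Λ t m : ℝ) := by
  intro m hm
  set N₁ := ⌈X⌉₊ with hN₁
  set c := greedyCount Λ t with hc
  have h1r : (0:ℝ) < 1 + r := by linarith
  have ht' : 0 < t' := lt_of_lt_of_le (by nlinarith) htt'
  have hXN : X ≤ (N₁ : ℝ) := Nat.le_ceil X
  have hN1 : 1 ≤ N₁ := by
    rw [hN₁]
    exact Nat.one_le_ceil_iff.mpr (lt_of_lt_of_le zero_lt_one hX)
  -- the key interval estimate
  have key : ∀ n : ℕ, N₁ ≤ n → n < m →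
      (∀ k : ℕ, n + 1 ≤ k → k < m → (c k : ℝ) < t * (k + 1)) →
      (c n : ℝ) + t' * (((m : ℝ) - 1) / (1 + r) - n) ≤ c m := by
    intro n hn hnm hcond
    have hi := greedyCount_interval Λ t (a := n+1) (b := m) (by omega) hcond
    have hIco : Finset.Ico (n+1) m = Finset.Ioc n (m-1) := by
      ext k; simp only [Finset.mem_Ico, Finset.mem_Ioc]; omega
    have hmn : (n : ℝ) ≤ ((m-1 : ℕ) : ℝ) := by
      have : n ≤ m - 1 := by omega
      exact_mod_cast this
    have hdiff := countFn_diff_eq' Λ (x := (n:ℝ)) (y := ((m-1 : ℕ):ℝ))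
      (Nat.cast_nonneg n) hmn
    rw [Nat.floor_natCast, Nat.floor_natCast] at hdiff
    have hch := hchain (n : ℝ) ((m-1 : ℕ) : ℝ) (hXN.trans (by exact_mod_cast hn)) hmn
    have hcast : ((m-1 : ℕ) : ℝ) = (m : ℝ) - 1 := by
      have : (1:ℕ) ≤ m := by omega
      push_cast [Nat.cast_sub this]
      ring
    rw [hcast] at hch hdiff
    have hmono : (c n : ℝ) ≤ c (n+1) := by
      exact_mod_cast greedyCount_mono Λ t (Nat.le_succ n)
    have hi' : (c (n+1) : ℝ) + ((Finset.Ico (n+1) m).filter (· ∈ Λ)).card ≤ c m := by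
      exact_mod_cast hi
    rw [hIco] at hi'
    rw [← hdiff] at hi'
    linarith
  -- case split on existence of a caught-up point
  by_cases hs : ∃ k, N₁ ≤ k ∧ k ≤ m ∧ t * (k : ℝ) ≤ c k
  · -- take the largest caught-up point, via Nat.findGreatest
    obtain ⟨n, hn1, hn2, hcn, hmax⟩ : ∃ n, N₁ ≤ n ∧ n ≤ m ∧ t * (n : ℝ) ≤ (c n : ℝ) ∧
        ∀ k : ℕ, n < k → k ≤ m → (c k : ℝ) < t * k := by
      obtain ⟨w, hw1, hw2, hw3⟩ := hs
      set P : ℕ → Prop := fun k => N₁ ≤ k ∧ t * (k : ℝ) ≤ (c k : ℝ) with hP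
      have hPw : P w := ⟨hw1, hw3⟩
      refine ⟨Nat.findGreatest P m, (Nat.findGreatest_spec hw2 hPw).1,
        Nat.findGreatest_le m, (Nat.findGreatest_spec hw2 hPw).2, ?_⟩
      intro k hk1 hk2
      have hng := Nat.findGreatest_is_greatest hk1 hk2
      have hkN : N₁ ≤ k := le_trans (Nat.findGreatest_spec hw2 hPw).1 (le_of_lt hk1)
      by_contra hcon
      push_neg at hcon
      exact hng ⟨hkN, hcon⟩
    rcases eq_or_lt_of_le hn2 with heq | hlt
    · -- n = m : caught up at m itself
      subst heq
      have hrm : 0 ≤ t * r * (n:ℝ) := by positivity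
      have hC : 0 ≤ t' * ((N₁ : ℝ) + 1) := by positivity
      linarith
    · -- n < m
      have hcond : ∀ k : ℕ, n + 1 ≤ k → k < m → (c k : ℝ) < t * (k + 1) := by
        intro k hk1 hk2
        have := hmax k (by omega) (by omega)
        nlinarith [ht.le]
      have hkey := key n hn1 hlt hcond
      have hmono : (c n : ℝ) ≤ c m := by
        exact_mod_cast greedyCount_mono Λ t hn2
      rcases le_total ((1 - r) * (m : ℝ)) (n : ℝ) with hcase | hcase
      · -- n large: monotone bound wins
        have h1 : t * ((1 - r) * (m:ℝ)) ≤ t * n := by nlinarith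
        have hC : 0 ≤ t' * ((N₁ : ℝ) + 1) := by positivity
        nlinarith
      · -- n small: window bound wins
        have e1 : (t - t') * ((1 - r) * (m:ℝ)) ≤ (t - t') * (n : ℝ) := by
          have h0 : (0:ℝ) ≤ (t' - t) * ((1 - r) * (m:ℝ) - n) :=
            mul_nonneg (by nlinarith) (by linarith)
          nlinarith
        have e2 : t' * ((m:ℝ) / (1 + r)) - t' ≤ t' * (((m:ℝ) - 1) / (1 + r)) := by
          have h1 : ((m:ℝ) - 1) / (1 + r) = (m:ℝ)/(1+r) - 1/(1+r) := by ring
          have h2 : 1/(1+r) ≤ 1 := by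
            rw [div_le_one h1r]; linarith
          rw [h1]
          nlinarith
        have e3 : t * m - t * r * m ≤ (t - t') * ((1 - r) * (m:ℝ)) + t' * ((m:ℝ)/(1+r)) := by
          have hb : -(1 - r) + 1/(1+r) = r^2/(1+r) := by field_simp; ring
          have hbpos : (0:ℝ) ≤ t' * (r^2/(1+r)) * m := by positivity
          have expand : (t - t') * ((1 - r) * (m:ℝ)) + t' * ((m:ℝ)/(1+r))
              = t * m - t * r * m + t' * ((-(1 - r) + 1/(1+r))) * m := by ring
          rw [expand, hb]
          linarith
        have hN0 : (0:ℝ) ≤ N₁ := Nat.cast_nonneg N₁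
        have hCge : t' ≤ t' * ((N₁ : ℝ) + 1) := by nlinarith
        have hexp : t' * (((m:ℝ) - 1) / (1 + r) - (n:ℝ))
            = t' * (((m:ℝ) - 1) / (1 + r)) - t' * n := by ring
        have e1' : (t - t') * ((1 - r) * (m:ℝ)) ≤ t * n - t' * n := by linarith [e1]
        have e3' : t * (m:ℝ) - t * r * m
            ≤ (t - t') * ((1 - r) * (m:ℝ)) + t' * ((m:ℝ)/(1+r)) := e3
        linarith [hkey, hcn, e1', e2, e3', hCge, hexp]
  · -- never caught up on [N₁, m] : all of Λ was taken
    push_neg at hs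
    have hcond : ∀ k : ℕ, N₁ + 1 ≤ k → k < m → (c k : ℝ) < t * (k + 1) := by
      intro k hk1 hk2
      have := hs k (by omega) (by omega)
      nlinarith [ht.le]
    have hcond' : ∀ k : ℕ, N₁ + 1 ≤ k → k < m → (c k : ℝ) < t * (k + 1) := hcond
    have hkey := key N₁ le_rfl (by omega) (fun k hk1 hk2 => hcond k hk1 hk2)
    have hc0 : (0:ℝ) ≤ c N₁ := Nat.cast_nonneg _
    have ht2 : t * (1 + r) ≤ t' := htt'
    have e2 : t * m - t' - t' * N₁ ≤ t' * (((m:ℝ) - 1) / (1 + r) - N₁) := by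
      have h1 : t' * (((m:ℝ) - 1) / (1+r) - (N₁:ℝ))
          = (t'/(1+r)) * m - t'/(1+r) - t' * N₁ := by
        field_simp
      have h2 : t * (m:ℝ) ≤ (t'/(1+r)) * m := by
        have hm0 : (0:ℝ) ≤ m := Nat.cast_nonneg m
        have : t ≤ t'/(1+r) := by
          rw [le_div_iff₀ h1r]; linarith [mul_comm t (1+r)]
        nlinarith
      have h3 : t'/(1+r) ≤ t' := by
        rw [div_le_iff₀ h1r]; nlinarith
      linarith [h1, h2, h3]
    have hrm : 0 ≤ t * r * (m:ℝ) := by positivity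
    linarith [hkey, e2, hc0, hrm]

/-- eventual lower bound for the greedy count -/
lemma greedy_eventual_lower (Λ : Set ℕ) {L t : ℝ} (ht : 0 < t) (htL : t < L)
    (hL : Tendsto (fun r => lowerWindow Λ r) (nhdsWithin 0 (Set.Ioi 0)) (nhds L)) :
    ∀ ε : ℝ, 0 < ε → ∀ᶠ m : ℕ in atTop, (t - ε) * m ≤ (greedyCount Λ t m : ℝ) := by
  intro ε hε
  set t' := (t + L) / 2 with ht'def
  have ht'pos : 0 < t' := by rw [ht'def]; linarith
  have htt' : t < t' := by rw [ht'def]; linarith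
  have ht'L : t' < L := by rw [ht'def]; linarith
  -- pick a suitable r
  have hev1 : ∀ᶠ r in nhdsWithin (0:ℝ) (Set.Ioi 0), t' < lowerWindow Λ r :=
    hL.eventually (eventually_gt_nhds ht'L)
  set δ := min (ε / (2 * t)) ((t' - t) / t) with hδdef
  have hδpos : 0 < δ := by
    apply lt_min
    · positivity
    · apply div_pos (by linarith) ht
  have hev2 : Set.Ioo (0:ℝ) δ ∈ nhdsWithin (0:ℝ) (Set.Ioi 0) :=
    Ioo_mem_nhdsGT_of_mem (Set.left_mem_Ico.2 hδpos)
  obtain ⟨r, hr1, hr2⟩ := (hev1.and hev2).exists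
  obtain ⟨hr0, hrδ⟩ := hr2
  have hrt : t * r ≤ ε / 2 := by
    have h1 : r ≤ ε / (2 * t) := le_of_lt (lt_of_lt_of_le hrδ (min_le_left _ _))
    have h2 : t * r ≤ t * (ε / (2 * t)) := mul_le_mul_of_nonneg_left h1 ht.le
    have h3 : t * (ε / (2 * t)) = ε / 2 := by field_simp
    linarith
  have hrt' : t * (1 + r) ≤ t' := by
    have : r ≤ (t' - t) / t := le_of_lt (lt_of_lt_of_le hrδ (min_le_right _ _))
    rw [le_div_iff₀ ht] at this
    nlinarith
  -- eventual window bound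
  have hbdd : IsBoundedUnder (· ≥ ·) atTop (fun x : ℝ => windowRatio Λ r x) :=
    ⟨0, eventually_map.2 (windowRatio_nonneg Λ hr0)⟩
  have hev3 : ∀ᶠ x : ℝ in atTop, t' < windowRatio Λ r x :=
    eventually_lt_of_lt_liminf hr1 hbdd
  obtain ⟨X₀, hX₀⟩ := eventually_atTop.1 hev3
  set X := max X₀ 1 with hXdef
  have hX1 : (1:ℝ) ≤ X := le_max_right _ _
  have hwin : ∀ x : ℝ, X ≤ x → t' * (r * x) ≤ (countFn Λ ((1 + r) * x) : ℝ) - countFn Λ x := by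
    intro x hx
    have hx0 : (0:ℝ) < x := lt_of_lt_of_le one_pos (hX1.trans hx)
    have h := hX₀ x (le_trans (le_max_left _ _) hx)
    rw [windowRatio, lt_div_iff₀ (by positivity)] at h
    linarith [mul_comm (r * x) t']
  have hchain := countFn_chain Λ hr0 ht'pos.le hX1 hwin
  have hglow := greedy_lower Λ ht hrt' hr0 hX1 hchain
  -- conclude
  set C := t' * ((⌈X⌉₊ : ℝ) + 1) with hCdef
  have hCpos : 0 < C := by
    rw [hCdef]; positivity
  filter_upwards [eventually_ge_atTop (⌈X⌉₊ + 1), eventually_ge_atTop ⌈2 * C / ε⌉₊]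
    with m hm1 hm2
  have h1 := hglow m hm1
  have hm2' : 2 * C / ε ≤ (m : ℝ) := le_trans (Nat.le_ceil _) (Nat.cast_le.2 hm2)
  have hm0 : (0:ℝ) ≤ m := Nat.cast_nonneg m
  have h2 : C ≤ ε / 2 * m := by
    rw [div_le_iff₀ hε] at hm2'
    nlinarith
  have h3 : t * r * m ≤ ε / 2 * m := by nlinarith
  nlinarith [h1, h2, h3]

/-- the greedy set has density exactly t -/
lemma greedy_hasDensity (Λ : Set ℕ) {L t : ℝ} (ht : 0 < t) (htL : t < L)
    (hL : Tendsto (fun r => lowerWindow Λ r) (nhdsWithin 0 (Set.Ioi 0)) (nhds L)) :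
    HasDensity (greedySet Λ t) t := by
  rw [HasDensity, Metric.tendsto_nhds]
  intro ε hε
  set ε' := min (ε / 2) (t / 2) with hε'def
  have hε'pos : 0 < ε' := lt_min (by linarith) (by linarith)
  have hε'le : ε' ≤ ε / 2 := min_le_left _ _
  have hε't : ε' ≤ t / 2 := min_le_right _ _
  obtain ⟨M₀, hM₀⟩ := eventually_atTop.1 (greedy_eventual_lower Λ ht htL hL ε' hε'pos)
  filter_upwards [eventually_ge_atTop (1:ℝ), eventually_ge_atTop ((M₀:ℝ)),
    eventually_gt_atTop ((t + 1) / ε)] with x hx1 hxM hxε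
  have hx0 : (0:ℝ) < x := lt_of_lt_of_le one_pos hx1
  rw [countFn_greedySet Λ t hx0.le, Real.dist_eq, abs_lt]
  set m := ⌊x⌋₊ + 1 with hmdef
  have hmx : (x:ℝ) ≤ m := by
    rw [hmdef]
    push_cast
    linarith [Nat.lt_floor_add_one x]
  have hmx' : (m:ℝ) ≤ x + 1 := by
    rw [hmdef]
    push_cast
    linarith [Nat.floor_le hx0.le]
  have hmM : M₀ ≤ m := by
    have : (M₀:ℝ) ≤ m := le_trans hxM hmx
    exact_mod_cast this
  have hlow := hM₀ m hmM
  have hup := greedyCount_lt Λ ht.le m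
  constructor
  · -- lower bound
    have h1 : (t - ε') * x ≤ (t - ε') * m :=
      mul_le_mul_of_nonneg_left hmx (by linarith)
    have h2 : (t - ε') * x ≤ greedyCount Λ t m := le_trans h1 hlow
    have h3 : t - ε' ≤ (greedyCount Λ t m : ℝ) / x := (le_div_iff₀ hx0).2 h2
    linarith
  · -- upper bound
    have h4 : (greedyCount Λ t m : ℝ) ≤ t * x + (t + 1) := by nlinarith [hup, hmx']
    have h6 : t + 1 < ε * x := by
      rw [div_lt_iff₀ hε] at hxε
      linarith [mul_comm x ε]
    rw [sub_lt_iff_lt_add, div_lt_iff₀ hx0]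
    nlinarith [h4, h6]

/-- the empty set has density 0 -/
lemma hasDensity_empty : HasDensity (∅ : Set ℕ) 0 := by
  have h : ∀ x : ℝ, countFn (∅ : Set ℕ) x = 0 := by
    intro x
    rw [countFn]
    convert Set.ncard_empty ℕ using 2
    simp
  refine tendsto_const_nhds.congr fun x => ?_
  rw [h x]
  simp

/-- The minimum density `D̲₂(Λ)` is the supremum of densities of
measurable subsets of `Λ`. -/
theorem minDensity_eq_sup_subset_densities (Λ : Set ℕ) (L : ℝ)
    (hL : Tendsto (fun r => lowerWindow Λ r) (nhdsWithin 0 (Set.Ioi 0)) (nhds L)) :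
    IsLUB {d : ℝ | ∃ Λ' : Set ℕ, Λ' ⊆ Λ ∧ HasDensity Λ' d} L := by
  constructor
  · -- L is an upper bound
    rintro d ⟨Λ', hsub, hd⟩
    refine ge_of_tendsto hL ?_
    filter_upwards [self_mem_nhdsWithin] with r hr
    exact density_le_lowerWindow hsub hd hr
  · -- L is the least upper bound
    intro b hb
    have h0 : (0:ℝ) ∈ {d : ℝ | ∃ Λ' : Set ℕ, Λ' ⊆ Λ ∧ HasDensity Λ' d} :=
      ⟨∅, Set.empty_subset Λ, hasDensity_empty⟩
    have hb0 : (0:ℝ) ≤ b := hb h0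
    by_contra hbL
    push_neg at hbL
    have hmaxL : max b 0 < L := max_lt hbL (hb0.trans_lt hbL)
    set t := (max b 0 + L) / 2 with htdef
    have hmax0 : (0:ℝ) ≤ max b 0 := le_max_right b 0
    have ht0 : 0 < t := by rw [htdef]; linarith
    have htL : t < L := by rw [htdef]; linarith
    have hbt : b < t := by
      have : b ≤ max b 0 := le_max_left b 0
      rw [htdef]; linarith
    have htS : t ∈ {d : ℝ | ∃ Λ' : Set ℕ, Λ' ⊆ Λ ∧ HasDensity Λ' d} :=
      ⟨greedySet Λ t, greedySet_subset Λ t, greedy_hasDensity Λ ht0 htL hL⟩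
    exact absurd (hb htS) (not_le.2 hbt)
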